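/- Let X be a topological space, let f ⊆ X × X be a relation on X, and let B ⊆ X be an attractor block for f. Then every relation g ⊆ X × X satisfying g ⊆ (closure(B) × closure(Bᶜ))ᶜ also has B as an attractor block; moreover the set V = (closure(B) × closure(Bᶜ))ᶜ is open in X × X and contains f. -/
import Mathlib


/-- The image of a set `S` under a relation `f ⊆ X × X`. -/
def relImage {X : Type*} (f : Set (X × X)) (S : Set X) : Set X :=
  {y | ∃ x ∈ S, (x, y) ∈ f}

/-- `B` is an attractor block for `f` if `f(closure B) ⊆ interior B`. -/
def IsAttractorBlock {X : Type*} [TopologicalSpace X] (f : Set (X × X)) (B : Set X) : Prop :=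
  relImage f (closure B) ⊆ interior B

/-- If `B` is an attractor block for `f`, then every relation
`g ⊆ (closure B × closure Bᶜ)ᶜ` also has `B` as an attractor block; moreover
`V = (closure B × closure Bᶜ)ᶜ` is open and contains `f`. -/
theorem attractorBlock_of_subset_compl {X : Type*} [TopologicalSpace X]
    (f : Set (X × X)) (B : Set X) (hB : IsAttractorBlock f B) :
    (∀ g : Set (X × X), g ⊆ (closure B ×ˢ closure Bᶜ)ᶜ → IsAttractorBlock g B) ∧
      IsOpen ((closure B ×ˢ closure Bᶜ)ᶜ) ∧ f ⊆ (closure B ×ˢ closure Bᶜ)ᶜ := by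
  refine ⟨fun g hg => ?_, (isClosed_closure.prod isClosed_closure).isOpen_compl, ?_⟩
  · rintro y ⟨x, hx, hxy⟩
    have := hg hxy
    rw [Set.mem_compl_iff, Set.mem_prod] at this
    push_neg at this
    rw [closure_compl] at this
    simpa using this hx
  · rintro ⟨x, y⟩ hxy
    rw [Set.mem_compl_iff, Set.mem_prod]
    push_neg
    intro hx
    have : y ∈ interior B := hB ⟨x, hx, hxy⟩
    rw [← compl_compl (interior B), ← closure_compl] at this
    exact this
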